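/- Let μ be a finitely supported generating probability measure on I. Then: (i) uniform irreducibility: there exists M ∈ ℕ such that for every pair x, y of adjacent vertices of the tree I there exists k ≤ M with p_k(x, y) > 0; (ii) bounded step-length: there exists N ∈ ℕ such that p(x, y) > 0 implies d(x, y) ≤ N; (iii) there exists δ > 0 such that p(x, y) > 0 implies p(x, y) ≥ δ. -/

import Mathlib

open Filter Topology MeasureTheory

/-- Words in the free monoid on two letters `α = true`, `β = false`. -/
abbrev Word := List Bool

/-- Conjugation: reverse the word and swap the two letters. -/
def wconj (x : Word) : Word := x.reverse.map (fun b => !b)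

/-- Fusion multiplicity `m(z; x, y)`: the number of triples `(x₀, w, y₀)` with
`x = x₀w`, `y = w̄y₀` and `z = x₀y₀`. -/
def fm (x y z : Word) : ℕ :=
  ((Finset.range (x.length + 1)).filter (fun k =>
    wconj (x.drop k) <+: y ∧ z = x.take k ++ y.drop (x.length - k))).card

/-- Maximal alternating blocks of a word. -/
def blocks : Word → List Word
  | [] => []
  | a :: rest =>
    match blocks rest with
    | [] => [[a]]
    | b :: bs => if b.head? = some a then [a] :: b :: bs else (a :: b) :: bs

/-- The quantum integer `[n]_q = (qⁿ - q⁻ⁿ)/(q - q⁻¹)`. -/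
noncomputable def qnum (q : ℝ) (n : ℕ) : ℝ := (q ^ n - q⁻¹ ^ n) / (q - q⁻¹)

/-- Quantum dimension `dim_q(x) = ∏ᵢ [|xᵢ|+1]_q` over the maximal alternating blocks. -/
noncomputable def dimq (q : ℝ) (x : Word) : ℝ :=
  ((blocks x).map (fun b => qnum q (b.length + 1))).prod

/-- Classical dimension `dim₁(x) = ∏ᵢ (|xᵢ|+1)` over the maximal alternating blocks. -/
def dim1 (x : Word) : ℕ := ((blocks x).map (fun b => b.length + 1)).prod
/-- The transition kernel of the random walk on `I` associated with a probability
measure `μ`: `p(x,y) = Σ_z μ(z)·m(z; x̄, y)·dim_q(y)/(dim_q(x)·dim_q(z))`. -/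
noncomputable def pker (q : ℝ) (μ : Word → ℝ) (x y : Word) : ℝ :=
  ∑ᶠ z : Word, μ z * (fm (wconj x) y z : ℝ) * dimq q y / (dimq q x * dimq q z)

/-- The `n`-step transition probabilities: `p₁ = p` and
`p_{n+1}(x,y) = Σ_u p_n(x,u)·p(u,y)`.  (The value at `n = 0` is irrelevant.) -/
noncomputable def pn (q : ℝ) (μ : Word → ℝ) : ℕ → Word → Word → ℝ
  | 0, _, _ => 0
  | 1, x, y => pker q μ x y
  | n + 2, x, y => ∑' u : Word, pn q μ (n + 1) x u * pker q μ u y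

/-- Adjacency in the Cayley tree of `ℕ ∗ ℕ`: each word `x` is adjacent to `xα` and `xβ`. -/
def adj (x y : Word) : Prop := (∃ a, y = x ++ [a]) ∨ (∃ a, x = y ++ [a])

/-- Length of the longest common prefix of two words. -/
def cpl : Word → Word → ℕ
  | a :: xs, b :: ys => if a = b then cpl xs ys + 1 else 0
  | _, _ => 0

/-- The graph distance on the Cayley tree of `ℕ ∗ ℕ`. -/
def tdist (x y : Word) : ℕ := x.length + y.length - 2 * cpl x y

/-! ### Auxiliary lemmas -/

section Aux

lemma wconj_wconj (x : Word) : wconj (wconj x) = x := by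
  simp [wconj, List.map_reverse, List.map_map, Function.comp_def]

lemma length_wconj (x : Word) : (wconj x).length = x.length := by simp [wconj]

lemma wconj_take (x : Word) (k : ℕ) : (wconj x).take k = wconj (x.drop (x.length - k)) := by
  simp [wconj, ← List.map_take, List.take_reverse]

lemma wconj_drop (x : Word) (k : ℕ) : (wconj x).drop k = wconj (x.take (x.length - k)) := by
  simp [wconj, ← List.map_drop, List.drop_reverse]

lemma cpl_ge_of_prefix : ∀ (p x y : Word), p <+: x → p <+: y → p.length ≤ cpl x y
  | [], _, _, _, _ => by simp
  | a :: p', x, y, hx, hy => by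
    obtain ⟨tx, rfl⟩ := hx
    obtain ⟨ty, rfl⟩ := hy
    have := cpl_ge_of_prefix p' (p' ++ tx) (p' ++ ty)
      (List.prefix_append _ _) (List.prefix_append _ _)
    simp only [List.cons_append, List.length_cons, cpl, List.append_eq, if_true, reduceIte]
    omega

lemma fm_pos_iff (x y z : Word) : 0 < fm (wconj x) y z ↔
    ∃ m, m ≤ x.length ∧ x.take m <+: y ∧ z = wconj (x.drop m) ++ y.drop m := by
  rw [fm, Finset.card_pos]
  constructor
  · rintro ⟨k, hk⟩
    rw [Finset.mem_filter, Finset.mem_range, length_wconj] at hk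
    obtain ⟨hkr, hpre, hz⟩ := hk
    rw [wconj_drop, wconj_wconj] at hpre
    rw [wconj_take] at hz
    exact ⟨x.length - k, Nat.sub_le _ _, hpre, hz⟩
  · rintro ⟨m, hm, hpre, hz⟩
    refine ⟨x.length - m, ?_⟩
    rw [Finset.mem_filter, Finset.mem_range, length_wconj]
    have hmk : x.length - (x.length - m) = m := by omega
    refine ⟨by omega, ?_, ?_⟩
    · rw [wconj_drop, wconj_wconj, hmk]; exact hpre
    · rw [wconj_take, hmk]; exact hz

lemma fm_pos_append (w x y z : Word) (h : 0 < fm (wconj x) y z) :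
    0 < fm (wconj (w ++ x)) (w ++ y) z := by
  rw [fm_pos_iff] at h ⊢
  obtain ⟨m, hm, hpre, hz⟩ := h
  refine ⟨w.length + m, by simp; omega, ?_, ?_⟩
  · rw [List.take_length_add_append]
    exact (List.prefix_append_right_inj w).2 hpre
  · rw [List.drop_length_add_append, List.drop_length_add_append]
    exact hz


section Qnum

variable {q : ℝ} (hq0 : 0 < q) (hq1 : q < 1)
include hq0 hq1

lemma qnum_eq (m : ℕ) :
    qnum q (m + 1) = q⁻¹ ^ m * ((1 - q ^ (2 * m + 2)) / (1 - q ^ 2)) := by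
  have hq : q ≠ 0 := ne_of_gt hq0
  have h1 : (1 : ℝ) - q ^ 2 ≠ 0 := by nlinarith
  have h4 : q ^ 2 - 1 ≠ 0 := by intro h; apply h1; linarith
  have h2 : q - q⁻¹ ≠ 0 := by
    intro h
    rw [sub_eq_zero] at h
    have : q * q = 1 := by field_simp at h; nlinarith [h]
    nlinarith
  have hpow : q ^ m ≠ 0 := pow_ne_zero _ hq
  rw [qnum]
  field_simp [h4]
  ring_nf
  have hA : -(q * q ^ m) + q ^ 3 * q ^ m ≠ 0 := by
    have : -(q * q ^ m) + q ^ 3 * q ^ m = q * q ^ m * (q ^ 2 - 1) := by ring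
    rw [this]
    exact mul_ne_zero (mul_ne_zero hq hpow) h4
  field_simp [hA]
  have hm : q ^ m * q⁻¹ ^ m = 1 := by rw [← mul_pow, mul_inv_cancel₀ hq, one_pow]
  rw [show q ^ (m * 2) = q ^ m * q ^ m by ring]
  linear_combination (-(q ^ 2 * q ^ m - q ^ 4 * q ^ m)) * hm

lemma one_le_qinv_pow (m : ℕ) : (1:ℝ) ≤ q⁻¹ ^ m := by
  have hiq : (1:ℝ) ≤ q⁻¹ := by nlinarith [mul_inv_cancel₀ (ne_of_gt hq0), inv_pos.mpr hq0]
  exact one_le_pow₀ hiq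

lemma le_qnum (m : ℕ) : q⁻¹ ^ m ≤ qnum q (m + 1) := by
  rw [qnum_eq hq0 hq1]
  have h1 : 0 < 1 - q ^ 2 := by nlinarith
  have h2 : q ^ (2 * m + 2) ≤ q ^ 2 := by
    apply pow_le_pow_of_le_one hq0.le hq1.le
    omega
  have h3 : 0 < q⁻¹ ^ m := by positivity
  have h4 : (1 : ℝ) ≤ (1 - q ^ (2 * m + 2)) / (1 - q ^ 2) := by
    rw [le_div_iff₀ h1]
    nlinarith
  nlinarith

lemma qnum_le (m : ℕ) : qnum q (m + 1) ≤ q⁻¹ ^ m * (1 - q ^ 2)⁻¹ := by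
  rw [qnum_eq hq0 hq1]
  have h1 : 0 < 1 - q ^ 2 := by nlinarith
  have h3 : 0 < q⁻¹ ^ m := by positivity
  have h4 : (1 - q ^ (2 * m + 2)) / (1 - q ^ 2) ≤ (1 - q ^ 2)⁻¹ := by
    rw [div_le_iff₀ h1]
    have h5 : 0 ≤ q ^ (2 * m + 2) := by positivity
    rw [inv_mul_cancel₀ (ne_of_gt h1)]
    nlinarith
  nlinarith

lemma qnum_pos (m : ℕ) : 0 < qnum q (m + 1) :=
  lt_of_lt_of_le (by positivity) (le_qnum hq0 hq1 m)

lemma one_le_qnum (m : ℕ) : 1 ≤ qnum q (m + 1) :=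
  le_trans (one_le_qinv_pow hq0 hq1 m) (le_qnum hq0 hq1 m)

lemma qnum_add_le (β γ : ℕ) :
    qnum q (β + γ + 1) ≤ (1 - q ^ 2)⁻¹ * (qnum q (β + 1) * qnum q (γ + 1)) := by
  have h1 : 0 < 1 - q ^ 2 := by nlinarith
  have hβ := le_qnum hq0 hq1 β
  have hγ := le_qnum hq0 hq1 γ
  have h2 := qnum_le hq0 hq1 (β + γ)
  have hpβ : (0:ℝ) < q⁻¹ ^ β := by positivity
  have hpγ : (0:ℝ) < q⁻¹ ^ γ := by positivity
  have h3 : q⁻¹ ^ (β + γ) = q⁻¹ ^ β * q⁻¹ ^ γ := pow_add _ _ _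
  have h4 : q⁻¹ ^ β * q⁻¹ ^ γ ≤ qnum q (β + 1) * qnum q (γ + 1) :=
    mul_le_mul hβ hγ hpγ.le (le_trans hpβ.le hβ)
  calc qnum q (β + γ + 1) ≤ q⁻¹ ^ (β + γ) * (1 - q ^ 2)⁻¹ := h2
    _ = (1 - q ^ 2)⁻¹ * (q⁻¹ ^ β * q⁻¹ ^ γ) := by rw [h3]; ring
    _ ≤ (1 - q ^ 2)⁻¹ * (qnum q (β + 1) * qnum q (γ + 1)) :=
        mul_le_mul_of_nonneg_left h4 (by positivity)

lemma qnum_add_ge (β γ : ℕ) :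
    (1 - q ^ 2) ^ 2 * (qnum q (β + 1) * qnum q (γ + 1)) ≤ qnum q (β + γ + 1) := by
  have h1 : 0 < 1 - q ^ 2 := by nlinarith
  have hβ := qnum_le hq0 hq1 β
  have hγ := qnum_le hq0 hq1 γ
  have h2 := le_qnum hq0 hq1 (β + γ)
  have hqβ := qnum_pos hq0 hq1 β
  have hqγ := qnum_pos hq0 hq1 γ
  have h5 : (1 - q ^ 2) * qnum q (β + 1) ≤ q⁻¹ ^ β := by
    have h := mul_le_mul_of_nonneg_left hβ h1.le
    calc (1 - q ^ 2) * qnum q (β + 1) ≤ (1 - q ^ 2) * (q⁻¹ ^ β * (1 - q ^ 2)⁻¹) := h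
      _ = q⁻¹ ^ β := by field_simp
  have h6 : (1 - q ^ 2) * qnum q (γ + 1) ≤ q⁻¹ ^ γ := by
    have h := mul_le_mul_of_nonneg_left hγ h1.le
    calc (1 - q ^ 2) * qnum q (γ + 1) ≤ (1 - q ^ 2) * (q⁻¹ ^ γ * (1 - q ^ 2)⁻¹) := h
      _ = q⁻¹ ^ γ := by field_simp
  have h7 : ((1 - q ^ 2) * qnum q (β + 1)) * ((1 - q ^ 2) * qnum q (γ + 1)) ≤
      q⁻¹ ^ β * q⁻¹ ^ γ :=
    mul_le_mul h5 h6 (by positivity) (by positivity)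
  calc (1 - q ^ 2) ^ 2 * (qnum q (β + 1) * qnum q (γ + 1))
      = ((1 - q ^ 2) * qnum q (β + 1)) * ((1 - q ^ 2) * qnum q (γ + 1)) := by ring
    _ ≤ q⁻¹ ^ β * q⁻¹ ^ γ := h7
    _ = q⁻¹ ^ (β + γ) := (pow_add _ _ _).symm
    _ ≤ qnum q (β + γ + 1) := h2

end Qnum

end Aux


section Blocks

lemma blocks_cons_eq (a : Bool) (w : Word) :
    blocks (a :: w) = match blocks w with
      | [] => [[a]]
      | b :: bs => if b.head? = some a then [a] :: b :: bs else (a :: b) :: bs := rfl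

lemma blocks_cons_of_cons (a : Bool) {w : Word} {c : Word} {cs : List Word}
    (h : blocks w = c :: cs) :
    blocks (a :: w) = if c.head? = some a then [a] :: c :: cs else (a :: c) :: cs := by
  rw [blocks_cons_eq, h]

lemma blocks_length_sum : ∀ w : Word, ((blocks w).map List.length).sum = w.length
  | [] => rfl
  | a :: rest => by
    have ih := blocks_length_sum rest
    cases h : blocks rest with
    | nil =>
      rw [h] at ih; simp at ih
      rw [blocks_cons_eq, h]
      simp [← ih]
    | cons b bs =>
      rw [h] at ih
      rw [blocks_cons_of_cons a h]
      by_cases hh : b.head? = some a <;> simp [hh] <;> simp at ih <;> omega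

lemma blocks_ne_nil : ∀ (w : Word), ∀ b ∈ blocks w, b ≠ []
  | [], b, hb => by simp [blocks] at hb
  | a :: rest, b, hb => by
    have ih := blocks_ne_nil rest
    cases h : blocks rest with
    | nil =>
      rw [blocks_cons_eq, h] at hb
      simp at hb; simp [hb]
    | cons c cs =>
      rw [blocks_cons_of_cons a h] at hb
      by_cases hh : c.head? = some a
      · rw [if_pos hh] at hb
        rcases List.mem_cons.mp hb with hb | hb
        · subst hb; simp
        · exact ih b (h ▸ hb)
      · rw [if_neg hh] at hb
        rcases List.mem_cons.mp hb with hb | hb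
        · subst hb; simp
        · exact ih b (h ▸ List.mem_cons_of_mem c hb)

lemma blocks_cons' (a : Bool) (w : Word) :
    ∃ b bs, blocks (a :: w) = b :: bs ∧ b.head? = some a := by
  cases h : blocks w with
  | nil => exact ⟨[a], [], by rw [blocks_cons_eq, h], rfl⟩
  | cons c cs =>
    by_cases hh : c.head? = some a
    · exact ⟨[a], c :: cs, by rw [blocks_cons_of_cons a h, if_pos hh], rfl⟩
    · exact ⟨a :: c, cs, by rw [blocks_cons_of_cons a h, if_neg hh], rfl⟩

lemma blocks_append : ∀ (p u : Word), p ≠ [] → u ≠ [] →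
    blocks (p ++ u) = blocks p ++ blocks u ∨
    ∃ bs b c cs, blocks p = bs ++ [b] ∧ blocks u = c :: cs ∧
      blocks (p ++ u) = bs ++ (b ++ c) :: cs
  | [], _, hp, _ => absurd rfl hp
  | [a], u, _, hu => by
    cases u with
    | nil => exact absurd rfl hu
    | cons a' u' =>
      obtain ⟨c, cs, hcu, hch⟩ := blocks_cons' a' u'
      have h1 : ([a] : Word) ++ (a' :: u') = a :: (a' :: u') := rfl
      by_cases hh : c.head? = some a
      · left
        rw [h1, blocks_cons_of_cons a hcu, if_pos hh, hcu]
        rfl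
      · right
        refine ⟨[], [a], c, cs, rfl, hcu, ?_⟩
        rw [h1, blocks_cons_of_cons a hcu, if_neg hh]
        rfl
  | a :: a' :: p'', u, _, hu => by
    set p' := a' :: p'' with hp'
    have ih := blocks_append p' u (by simp [hp']) hu
    have happ : (a :: p') ++ u = a :: (p' ++ u) := rfl
    rcases ih with ih | ⟨bs, b, c, cs, hbp, hcu, hpu⟩
    · left
      obtain ⟨d, ds, hdp, hdh⟩ := blocks_cons' a' p''
      have hdu : blocks (p' ++ u) = d :: (ds ++ blocks u) := by
        rw [ih, hp', hdp]; rfl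
      rw [happ, blocks_cons_of_cons a hdu, blocks_cons_of_cons a (hp' ▸ hdp)]
      by_cases hh : d.head? = some a <;> simp [hh]
    · cases bs with
      | nil =>
        simp only [List.nil_append] at hbp hpu
        have hbne : b ≠ [] := blocks_ne_nil p' b (by rw [hbp]; simp)
        have hbch : (b ++ c).head? = b.head? := by
          cases b with
          | nil => exact absurd rfl hbne
          | cons e es => rfl
        right
        by_cases hh : b.head? = some a
        · refine ⟨[[a]], b, c, cs, ?_, hcu, ?_⟩
          · rw [blocks_cons_of_cons a hbp, if_pos hh]
            rfl
          · rw [happ, blocks_cons_of_cons a hpu, hbch, if_pos hh]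
            rfl
        · refine ⟨[], a :: b, c, cs, ?_, hcu, ?_⟩
          · rw [blocks_cons_of_cons a hbp, if_neg hh]
            rfl
          · rw [happ, blocks_cons_of_cons a hpu, hbch, if_neg hh]
            rfl
      | cons e es =>
        have hbp' : blocks p' = e :: (es ++ [b]) := by rw [hbp]; rfl
        have hpu' : blocks (p' ++ u) = e :: (es ++ (b ++ c) :: cs) := by rw [hpu]; rfl
        right
        by_cases hh : e.head? = some a
        · refine ⟨[a] :: e :: es, b, c, cs, ?_, hcu, ?_⟩
          · rw [blocks_cons_of_cons a hbp', if_pos hh]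
            rfl
          · rw [happ, blocks_cons_of_cons a hpu', if_pos hh]
            rfl
        · refine ⟨(a :: e) :: es, b, c, cs, ?_, hcu, ?_⟩
          · rw [blocks_cons_of_cons a hbp', if_neg hh]
            rfl
          · rw [happ, blocks_cons_of_cons a hpu', if_neg hh]
            rfl

end Blocks



section Dimq

lemma dimq_nil (q : ℝ) : dimq q [] = 1 := by simp [dimq, blocks]

variable {q : ℝ} (hq0 : 0 < q) (hq1 : q < 1)
include hq0 hq1

lemma prod_qnum_pos : ∀ (l : List Word),
    0 < (l.map (fun b => qnum q (b.length + 1))).prod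
  | [] => by simp
  | b :: l' => by
    simp only [List.map_cons, List.prod_cons]
    exact mul_pos (qnum_pos hq0 hq1 _) (prod_qnum_pos l')

lemma one_le_prod_qnum : ∀ (l : List Word),
    1 ≤ (l.map (fun b => qnum q (b.length + 1))).prod
  | [] => by simp
  | b :: l' => by
    simp only [List.map_cons, List.prod_cons]
    have h1 := one_le_qnum hq0 hq1 b.length
    have h2 := one_le_prod_qnum l'
    nlinarith

lemma dimq_pos (w : Word) : 0 < dimq q w := prod_qnum_pos hq0 hq1 _

lemma one_le_dimq (w : Word) : 1 ≤ dimq q w := one_le_prod_qnum hq0 hq1 _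

lemma one_le_Cq : (1:ℝ) ≤ (1 - q ^ 2)⁻¹ := by
  have h1 : 0 < 1 - q ^ 2 := by nlinarith
  have hi := mul_inv_cancel₀ (ne_of_gt h1)
  nlinarith [inv_pos.mpr h1, sq_nonneg q, mul_nonneg (sq_nonneg q) (inv_pos.mpr h1).le]

lemma one_le_Kq : (1:ℝ) ≤ q⁻¹ * (1 - q ^ 2)⁻¹ := by
  have h1 : (1:ℝ) ≤ q⁻¹ := by nlinarith [mul_inv_cancel₀ (ne_of_gt hq0), inv_pos.mpr hq0]
  have h2 := one_le_Cq hq0 hq1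
  nlinarith

lemma prod_qnum_le_K : ∀ (l : List Word), (∀ b ∈ l, b ≠ []) →
    (l.map (fun b => qnum q (b.length + 1))).prod ≤
      (q⁻¹ * (1 - q ^ 2)⁻¹) ^ ((l.map List.length).sum)
  | [], _ => by simp
  | b :: l', h => by
    simp only [List.map_cons, List.prod_cons, List.sum_cons]
    have hb : b ≠ [] := h b (by simp)
    have hlen : b.length ≠ 0 := by simpa using hb
    have h1 : 0 < 1 - q ^ 2 := by nlinarith
    have key : qnum q (b.length + 1) ≤ (q⁻¹ * (1 - q ^ 2)⁻¹) ^ b.length := by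
      calc qnum q (b.length + 1) ≤ q⁻¹ ^ b.length * (1 - q ^ 2)⁻¹ := qnum_le hq0 hq1 _
        _ ≤ q⁻¹ ^ b.length * ((1 - q ^ 2)⁻¹) ^ b.length := by
            apply mul_le_mul_of_nonneg_left _ (by positivity)
            exact le_self_pow₀ (one_le_Cq hq0 hq1) hlen
        _ = (q⁻¹ * (1 - q ^ 2)⁻¹) ^ b.length := (mul_pow _ _ _).symm
    have ih := prod_qnum_le_K l' (fun b hb => h b (List.mem_cons_of_mem _ hb))
    rw [pow_add]
    have hq1p := qnum_pos hq0 hq1 b.length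
    exact mul_le_mul key ih (le_trans zero_le_one (one_le_prod_qnum hq0 hq1 l')) (by positivity)

lemma dimq_le (w : Word) : dimq q w ≤ (q⁻¹ * (1 - q ^ 2)⁻¹) ^ w.length := by
  rw [dimq, ← blocks_length_sum w]
  exact prod_qnum_le_K hq0 hq1 _ (blocks_ne_nil w)

lemma dimq_append_le (p u : Word) :
    dimq q (p ++ u) ≤ (1 - q ^ 2)⁻¹ * (dimq q p * dimq q u) := by
  have hC := one_le_Cq hq0 hq1
  rcases eq_or_ne p [] with rfl | hp
  · rw [List.nil_append, dimq_nil]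
    nlinarith [dimq_pos hq0 hq1 u]
  rcases eq_or_ne u [] with rfl | hu
  · rw [List.append_nil, dimq_nil]
    nlinarith [dimq_pos hq0 hq1 p]
  rcases blocks_append p u hp hu with h | ⟨bs, b, c, cs, hbp, hcu, hpu⟩
  · have : dimq q (p ++ u) = dimq q p * dimq q u := by
      rw [dimq, h, List.map_append, List.prod_append]; rfl
    rw [this]
    nlinarith [dimq_pos hq0 hq1 p, dimq_pos hq0 hq1 u,
      mul_pos (dimq_pos hq0 hq1 p) (dimq_pos hq0 hq1 u)]
  · set A := (bs.map (fun b => qnum q (b.length + 1))).prod with hA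
    set B := (cs.map (fun b => qnum q (b.length + 1))).prod with hB
    have hApos : 0 < A := prod_qnum_pos hq0 hq1 bs
    have hBpos : 0 < B := prod_qnum_pos hq0 hq1 cs
    have h1 : dimq q (p ++ u) = A * (qnum q (b.length + c.length + 1) * B) := by
      rw [dimq, hpu, List.map_append, List.map_cons, List.prod_append, List.prod_cons,
        List.length_append]
    have h2 : dimq q p = A * qnum q (b.length + 1) := by
      rw [dimq, hbp, List.map_append, List.prod_append]; simp [hA]
    have h3 : dimq q u = qnum q (c.length + 1) * B := by
      rw [dimq, hcu, List.map_cons, List.prod_cons]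
    have hX := qnum_add_le hq0 hq1 b.length c.length
    rw [h1, h2, h3]
    calc A * (qnum q (b.length + c.length + 1) * B)
        = (A * B) * qnum q (b.length + c.length + 1) := by ring
      _ ≤ (A * B) * ((1 - q ^ 2)⁻¹ * (qnum q (b.length + 1) * qnum q (c.length + 1))) :=
          mul_le_mul_of_nonneg_left hX (by positivity)
      _ = (1 - q ^ 2)⁻¹ * (A * qnum q (b.length + 1) * (qnum q (c.length + 1) * B)) := by
          ring

lemma dimq_append_ge (p u : Word) :
    (1 - q ^ 2) ^ 2 * (dimq q p * dimq q u) ≤ dimq q (p ++ u) := by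
  have h1 : 0 < 1 - q ^ 2 := by nlinarith
  have hc1 : (1 - q ^ 2) ^ 2 ≤ 1 := by nlinarith [sq_nonneg q, sq_nonneg (q^2)]
  rcases eq_or_ne p [] with rfl | hp
  · rw [List.nil_append, dimq_nil]
    nlinarith [dimq_pos hq0 hq1 u]
  rcases eq_or_ne u [] with rfl | hu
  · rw [List.append_nil, dimq_nil]
    nlinarith [dimq_pos hq0 hq1 p]
  rcases blocks_append p u hp hu with h | ⟨bs, b, c, cs, hbp, hcu, hpu⟩
  · have h2 : dimq q (p ++ u) = dimq q p * dimq q u := by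
      rw [dimq, h, List.map_append, List.prod_append]; rfl
    rw [h2]
    nlinarith [mul_pos (dimq_pos hq0 hq1 p) (dimq_pos hq0 hq1 u)]
  · set A := (bs.map (fun b => qnum q (b.length + 1))).prod with hA
    set B := (cs.map (fun b => qnum q (b.length + 1))).prod with hB
    have hApos : 0 < A := prod_qnum_pos hq0 hq1 bs
    have hBpos : 0 < B := prod_qnum_pos hq0 hq1 cs
    have h2 : dimq q (p ++ u) = A * (qnum q (b.length + c.length + 1) * B) := by
      rw [dimq, hpu, List.map_append, List.map_cons, List.prod_append, List.prod_cons,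
        List.length_append]
    have h3 : dimq q p = A * qnum q (b.length + 1) := by
      rw [dimq, hbp, List.map_append, List.prod_append]; simp [hA]
    have h4 : dimq q u = qnum q (c.length + 1) * B := by
      rw [dimq, hcu, List.map_cons, List.prod_cons]
    have hX := qnum_add_ge hq0 hq1 b.length c.length
    rw [h2, h3, h4]
    calc (1 - q ^ 2) ^ 2 * (A * qnum q (b.length + 1) * (qnum q (c.length + 1) * B))
        = (A * B) * ((1 - q ^ 2) ^ 2 * (qnum q (b.length + 1) * qnum q (c.length + 1))) := by
          ring
      _ ≤ (A * B) * qnum q (b.length + c.length + 1) :=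
          mul_le_mul_of_nonneg_left hX (by positivity)
      _ = A * (qnum q (b.length + c.length + 1) * B) := by ring

end Dimq



section Pker
set_option linter.unusedSectionVars false

variable {q : ℝ} (hq0 : 0 < q) (hq1 : q < 1)
variable {μ : Word → ℝ} (hμ0 : ∀ z, 0 ≤ μ z) (hfin : {z : Word | μ z ≠ 0}.Finite)
include hq0 hq1 hμ0 hfin

lemma pker_eq (x y : Word) :
    pker q μ x y = ∑ z ∈ hfin.toFinset,
      μ z * (fm (wconj x) y z : ℝ) * dimq q y / (dimq q x * dimq q z) := by
  apply finsum_eq_sum_of_support_subset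
  intro z hz
  rw [Function.mem_support] at hz
  rw [Set.Finite.coe_toFinset]
  by_contra h
  simp only [Set.mem_setOf_eq, not_not] at h
  apply hz
  rw [h]
  ring

lemma pker_term_nonneg (x y z : Word) :
    0 ≤ μ z * (fm (wconj x) y z : ℝ) * dimq q y / (dimq q x * dimq q z) :=
  div_nonneg
    (mul_nonneg (mul_nonneg (hμ0 z) (Nat.cast_nonneg _)) (dimq_pos hq0 hq1 y).le)
    (mul_nonneg (dimq_pos hq0 hq1 x).le (dimq_pos hq0 hq1 z).le)

lemma pker_nonneg (x y : Word) : 0 ≤ pker q μ x y := by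
  rw [pker_eq hq0 hq1 hμ0 hfin]
  exact Finset.sum_nonneg fun z _ => pker_term_nonneg hq0 hq1 hμ0 hfin x y z

lemma le_pker (x y z : Word) (hz : μ z ≠ 0) :
    μ z * (fm (wconj x) y z : ℝ) * dimq q y / (dimq q x * dimq q z) ≤ pker q μ x y := by
  rw [pker_eq hq0 hq1 hμ0 hfin]
  exact Finset.single_le_sum (fun i _ => pker_term_nonneg hq0 hq1 hμ0 hfin x y i)
    (hfin.mem_toFinset.mpr hz)

lemma pker_pos_of (x y z : Word) (hz : μ z ≠ 0) (hfm : 0 < fm (wconj x) y z) :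
    0 < pker q μ x y := by
  refine lt_of_lt_of_le ?_ (le_pker hq0 hq1 hμ0 hfin x y z hz)
  have h1 : 0 < μ z := (hμ0 z).lt_of_ne (Ne.symm hz)
  have h2 : (0:ℝ) < (fm (wconj x) y z : ℝ) := by exact_mod_cast hfm
  exact div_pos (mul_pos (mul_pos h1 h2) (dimq_pos hq0 hq1 y))
    (mul_pos (dimq_pos hq0 hq1 x) (dimq_pos hq0 hq1 z))

lemma pker_pos_elim (x y : Word) (h : pker q μ x y ≠ 0) :
    ∃ z, μ z ≠ 0 ∧ 0 < fm (wconj x) y z := by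
  by_contra hc
  push_neg at hc
  apply h
  rw [pker_eq hq0 hq1 hμ0 hfin]
  apply Finset.sum_eq_zero
  intro z hzmem
  have hz := hfin.mem_toFinset.mp hzmem
  have hfm0 : fm (wconj x) y z = 0 := Nat.le_zero.mp (hc z hz)
  rw [hfm0]
  simp

lemma pker_support_finite (x : Word) : {y | pker q μ x y ≠ 0}.Finite := by
  apply Set.Finite.subset
    (Set.Finite.biUnion (Set.finite_Iic x.length)
      (fun m _ => hfin.image (fun z => x.take m ++ z.drop (x.length - m))))
  intro y hy
  obtain ⟨z, hz, hfm⟩ := pker_pos_elim hq0 hq1 hμ0 hfin x y hy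
  obtain ⟨m, hm, hpre, hzeq⟩ := (fm_pos_iff x y z).mp hfm
  simp only [Set.mem_iUnion, Set.mem_image, Set.mem_setOf_eq, Set.mem_Iic]
  refine ⟨m, hm, z, hz, ?_⟩
  obtain ⟨t, ht⟩ := hpre
  have hlt : (x.take m).length = m := by rw [List.length_take]; omega
  have hdt : y.drop m = t := by
    have hd := List.drop_left (l₁ := x.take m) (l₂ := t)
    rw [hlt, ht] at hd
    exact hd
  have hlw : (wconj (x.drop m)).length = x.length - m := by
    rw [length_wconj, List.length_drop]
  have hzd : z.drop (x.length - m) = y.drop m := by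
    have hd := List.drop_left (l₁ := wconj (x.drop m)) (l₂ := y.drop m)
    rw [hlw] at hd
    rw [hzeq]
    exact hd
  rw [hzd, hdt, ht]

lemma pker_pos_append (w x y : Word) (h : 0 < pker q μ x y) :
    0 < pker q μ (w ++ x) (w ++ y) := by
  obtain ⟨z, hz, hfm⟩ := pker_pos_elim hq0 hq1 hμ0 hfin x y (ne_of_gt h)
  exact pker_pos_of hq0 hq1 hμ0 hfin _ _ z hz (fm_pos_append w x y z hfm)

lemma pn_nonneg : ∀ (n : ℕ) (x y : Word), 0 ≤ pn q μ n x y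
  | 0, x, y => le_of_eq rfl
  | 1, x, y => pker_nonneg hq0 hq1 hμ0 hfin x y
  | (n+2), x, y => tsum_nonneg fun u =>
      mul_nonneg (pn_nonneg (n+1) x u) (pker_nonneg hq0 hq1 hμ0 hfin u y)

lemma pn_support_finite : ∀ (n : ℕ) (x : Word), {u | pn q μ n x u ≠ 0}.Finite
  | 0, x => by
    have : {u | pn q μ 0 x u ≠ 0} = ∅ := by
      ext u; simp [show pn q μ 0 x u = 0 from rfl]
    rw [this]; exact Set.finite_empty
  | 1, x => pker_support_finite hq0 hq1 hμ0 hfin x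
  | (n+2), x => by
    apply Set.Finite.subset (Set.Finite.biUnion (pn_support_finite (n+1) x)
      (fun u _ => pker_support_finite hq0 hq1 hμ0 hfin u))
    intro y hy
    rw [Set.mem_setOf_eq] at hy
    have hex : ∃ u, pn q μ (n+1) x u * pker q μ u y ≠ 0 := by
      by_contra hc
      push_neg at hc
      apply hy
      show (∑' u : Word, pn q μ (n+1) x u * pker q μ u y) = 0
      simp [hc]
    obtain ⟨u, hu⟩ := hex
    have h1 : pn q μ (n+1) x u ≠ 0 := fun h => hu (by rw [h, zero_mul])
    have h2 : pker q μ u y ≠ 0 := fun h => hu (by rw [h, mul_zero])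
    exact Set.mem_biUnion h1 h2

lemma pn_mul_summable (n : ℕ) (x y : Word) :
    Summable (fun u => pn q μ (n+1) x u * pker q μ u y) := by
  apply summable_of_ne_finset_zero
    (s := (pn_support_finite hq0 hq1 hμ0 hfin (n+1) x).toFinset)
  intro u hu
  rw [Set.Finite.mem_toFinset, Set.mem_setOf_eq, not_not] at hu
  rw [hu, zero_mul]

lemma pn_pos_compose (n : ℕ) (x u y : Word) (h1 : 0 < pn q μ (n+1) x u)
    (h2 : 0 < pker q μ u y) : 0 < pn q μ (n+2) x y := by
  have hle := Summable.le_tsum (pn_mul_summable hq0 hq1 hμ0 hfin n x y) u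
    (fun j _ => mul_nonneg (pn_nonneg hq0 hq1 hμ0 hfin (n+1) x j)
      (pker_nonneg hq0 hq1 hμ0 hfin j y))
  calc (0:ℝ) < pn q μ (n+1) x u * pker q μ u y := mul_pos h1 h2
    _ ≤ ∑' v : Word, pn q μ (n+1) x v * pker q μ v y := hle
    _ = pn q μ (n+2) x y := rfl

lemma pn_pos_elim (n : ℕ) (x y : Word) (h : 0 < pn q μ (n+2) x y) :
    ∃ u, 0 < pn q μ (n+1) x u ∧ 0 < pker q μ u y := by
  have hex : ∃ u, pn q μ (n+1) x u * pker q μ u y ≠ 0 := by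
    by_contra hc
    push_neg at hc
    rw [show pn q μ (n+2) x y = ∑' u : Word, pn q μ (n+1) x u * pker q μ u y from rfl] at h
    simp [hc] at h
  obtain ⟨u, hu⟩ := hex
  have h1 : pn q μ (n+1) x u ≠ 0 := fun h => hu (by rw [h, zero_mul])
  have h2 : pker q μ u y ≠ 0 := fun h => hu (by rw [h, mul_zero])
  exact ⟨u, (pn_nonneg hq0 hq1 hμ0 hfin (n+1) x u).lt_of_ne (Ne.symm h1),
    (pker_nonneg hq0 hq1 hμ0 hfin u y).lt_of_ne (Ne.symm h2)⟩

lemma pn_pos_append : ∀ (n : ℕ) (w x y : Word), 0 < pn q μ n x y →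
    0 < pn q μ n (w ++ x) (w ++ y)
  | 0, w, x, y, h => absurd h (by rw [show pn q μ 0 x y = 0 from rfl]; exact lt_irrefl 0)
  | 1, w, x, y, h => pker_pos_append hq0 hq1 hμ0 hfin w x y h
  | (n+2), w, x, y, h => by
    obtain ⟨u, h1, h2⟩ := pn_pos_elim hq0 hq1 hμ0 hfin n x y h
    exact pn_pos_compose hq0 hq1 hμ0 hfin n (w ++ x) (w ++ u) (w ++ y)
      (pn_pos_append (n+1) w x u h1) (pker_pos_append hq0 hq1 hμ0 hfin w u y h2)

end Pker


/-- For a finitely supported generating probability measure `μ` on `I`: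
(i) uniform irreducibility; (ii) bounded step-length; (iii) a uniform lower bound `δ > 0`
on the nonzero one-step transition probabilities. -/
theorem walk_uniformly_irreducible_bounded_steps (q : ℝ) (hq0 : 0 < q) (hq1 : q < 1)
    (μ : Word → ℝ) (hμ0 : ∀ z, 0 ≤ μ z) (hμ1 : HasSum μ 1)
    (hfin : {z : Word | μ z ≠ 0}.Finite)
    (hgen : ∀ x y : Word, ∃ n : ℕ, 1 ≤ n ∧ 0 < pn q μ n x y) :
    (∃ M : ℕ, ∀ x y : Word, adj x y → ∃ k : ℕ, 1 ≤ k ∧ k ≤ M ∧ 0 < pn q μ k x y) ∧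
    (∃ N : ℕ, ∀ x y : Word, 0 < pn q μ 1 x y → tdist x y ≤ N) ∧
    (∃ δ : ℝ, 0 < δ ∧ ∀ x y : Word, 0 < pn q μ 1 x y → δ ≤ pn q μ 1 x y) := by
  have pn_one : ∀ x y : Word, pn q μ 1 x y = pker q μ x y := fun _ _ => rfl
  have h1q : 0 < 1 - q ^ 2 := by nlinarith
  refine ⟨?_, ?_, ?_⟩
  · -- (i) uniform irreducibility
    obtain ⟨n₁, hn₁, hp₁⟩ := hgen [] [true]
    obtain ⟨n₂, hn₂, hp₂⟩ := hgen [] [false]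
    obtain ⟨n₃, hn₃, hp₃⟩ := hgen [true] []
    obtain ⟨n₄, hn₄, hp₄⟩ := hgen [false] []
    refine ⟨max (max n₁ n₂) (max n₃ n₄), ?_⟩
    rintro x y (⟨a, rfl⟩ | ⟨a, rfl⟩)
    · cases a
      · refine ⟨n₂, hn₂, le_trans (le_trans (le_max_right n₁ n₂) (le_max_left _ _)) le_rfl, ?_⟩
        have := pn_pos_append hq0 hq1 hμ0 hfin n₂ x [] [false] hp₂
        simpa using this
      · refine ⟨n₁, hn₁, le_trans (le_max_left n₁ n₂) (le_max_left _ _), ?_⟩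
        have := pn_pos_append hq0 hq1 hμ0 hfin n₁ x [] [true] hp₁
        simpa using this
    · cases a
      · refine ⟨n₄, hn₄, le_trans (le_max_right n₃ n₄) (le_max_right _ _), ?_⟩
        have := pn_pos_append hq0 hq1 hμ0 hfin n₄ y [false] [] hp₄
        simpa using this
      · refine ⟨n₃, hn₃, le_trans (le_max_left n₃ n₄) (le_max_right _ _), ?_⟩
        have := pn_pos_append hq0 hq1 hμ0 hfin n₃ y [true] [] hp₃
        simpa using this
  · -- (ii) bounded step length
    refine ⟨hfin.toFinset.sup List.length, ?_⟩
    intro x y hp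
    rw [pn_one] at hp
    obtain ⟨z, hz, hfm⟩ := pker_pos_elim hq0 hq1 hμ0 hfin x y (ne_of_gt hp)
    obtain ⟨m, hm, hpre, hzeq⟩ := (fm_pos_iff x y z).mp hfm
    have hmy : m ≤ y.length := by
      have h := hpre.length_le
      rw [List.length_take] at h
      omega
    have hcl : m ≤ cpl x y := by
      have h2 := cpl_ge_of_prefix (x.take m) x y (List.take_prefix m x) hpre
      rw [List.length_take] at h2
      omega
    have hzlen : z.length = (x.length - m) + (y.length - m) := by
      rw [hzeq, List.length_append, length_wconj, List.length_drop, List.length_drop]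
    have hzN : z.length ≤ hfin.toFinset.sup List.length :=
      Finset.le_sup (hfin.mem_toFinset.mpr hz)
    rw [tdist]
    omega
  · -- (iii) uniform lower bound
    set N := hfin.toFinset.sup List.length with hNdef
    set K := q⁻¹ * (1 - q ^ 2)⁻¹ with hKdef
    have hK1 : (1:ℝ) ≤ K := one_le_Kq hq0 hq1
    have hKpos : (0:ℝ) < K := lt_of_lt_of_le one_pos hK1
    have hne : hfin.toFinset.Nonempty := by
      rcases Finset.eq_empty_or_nonempty hfin.toFinset with h | h
      · exfalso
        have hz0 : ∀ z, μ z = 0 := by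
          intro z
          by_contra hzz
          have hmem : z ∈ hfin.toFinset := hfin.mem_toFinset.mpr hzz
          rw [h] at hmem
          simp at hmem
        have hsum0 : HasSum μ 0 := by
          have hfe : μ = fun _ => 0 := funext hz0
          rw [hfe]
          exact hasSum_zero
        have h01 := hsum0.unique hμ1
        norm_num at h01
      · exact h
    obtain ⟨z0, hz0mem, hz0eq⟩ := Finset.exists_mem_eq_inf' hne μ
    set δμ := hfin.toFinset.inf' hne μ with hδμ
    have hδμpos : 0 < δμ := by
      rw [hz0eq]
      exact (hμ0 z0).lt_of_ne (Ne.symm (hfin.mem_toFinset.mp hz0mem))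
    set δ := δμ * ((1 - q ^ 2) ^ 2 / ((1 - q ^ 2)⁻¹ * K ^ N * K ^ N)) with hδ
    have hδpos : 0 < δ := by
      apply mul_pos hδμpos
      apply div_pos (pow_pos h1q 2)
      exact mul_pos (mul_pos (inv_pos.mpr h1q) (pow_pos hKpos N)) (pow_pos hKpos N)
    refine ⟨δ, hδpos, ?_⟩
    intro x y hp
    rw [pn_one] at hp ⊢
    obtain ⟨z, hz, hfm⟩ := pker_pos_elim hq0 hq1 hμ0 hfin x y (ne_of_gt hp)
    obtain ⟨m, hm, hpre, hzeq⟩ := (fm_pos_iff x y z).mp hfm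
    obtain ⟨t, ht⟩ := hpre
    have hxdec : x.take m ++ x.drop m = x := List.take_append_drop m x
    have hlp : (x.take m).length = m := by rw [List.length_take]; omega
    have hzlen : z.length = (x.length - m) + (y.length - m) := by
      rw [hzeq, List.length_append, length_wconj, List.length_drop, List.length_drop]
    have hzN : z.length ≤ N := Finset.le_sup (hfin.mem_toFinset.mpr hz)
    have htlen : t.length ≤ N := by
      have hy : y.length = m + t.length := by rw [← ht, List.length_append, hlp]
      omega
    have hslen : (x.drop m).length ≤ N := by rw [List.length_drop]; omega
    have hdp := dimq_pos hq0 hq1 (x.take m)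
    have hdy : (1 - q ^ 2) ^ 2 * dimq q (x.take m) ≤ dimq q y := by
      have h := dimq_append_ge hq0 hq1 (x.take m) t
      rw [ht] at h
      have h4 : dimq q (x.take m) ≤ dimq q (x.take m) * dimq q t :=
        le_mul_of_one_le_right hdp.le (one_le_dimq hq0 hq1 t)
      calc (1 - q ^ 2) ^ 2 * dimq q (x.take m)
          ≤ (1 - q ^ 2) ^ 2 * (dimq q (x.take m) * dimq q t) :=
            mul_le_mul_of_nonneg_left h4 (pow_pos h1q 2).le
        _ ≤ dimq q y := h
    have hdx : dimq q x ≤ (1 - q ^ 2)⁻¹ * (dimq q (x.take m) * K ^ N) := by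
      have h := dimq_append_le hq0 hq1 (x.take m) (x.drop m)
      rw [hxdec] at h
      have h2 : dimq q (x.drop m) ≤ K ^ N :=
        le_trans (dimq_le hq0 hq1 _) (pow_le_pow_right₀ hK1 hslen)
      have h3 := mul_le_mul_of_nonneg_left h2
        (mul_nonneg (inv_pos.mpr h1q).le hdp.le)
      nlinarith [h3, h]
    have hdz : dimq q z ≤ K ^ N :=
      le_trans (dimq_le hq0 hq1 z) (pow_le_pow_right₀ hK1 hzN)
    have hfm1 : (1:ℝ) ≤ (fm (wconj x) y z : ℝ) := by exact_mod_cast hfm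
    have hμz : δμ ≤ μ z := Finset.inf'_le μ (hfin.mem_toFinset.mpr hz)
    refine le_trans ?_ (le_pker hq0 hq1 hμ0 hfin x y z hz)
    have hnum : δμ * 1 * ((1 - q ^ 2) ^ 2 * dimq q (x.take m)) ≤
        μ z * (fm (wconj x) y z : ℝ) * dimq q y := by
      apply mul_le_mul _ hdy (by positivity) _
      · exact mul_le_mul hμz hfm1 zero_le_one (le_trans hδμpos.le hμz)
      · exact mul_nonneg (le_trans hδμpos.le hμz) (le_trans zero_le_one hfm1)
    have hdenpos : 0 < dimq q x * dimq q z :=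
      mul_pos (dimq_pos hq0 hq1 x) (dimq_pos hq0 hq1 z)
    have hden : dimq q x * dimq q z ≤
        ((1 - q ^ 2)⁻¹ * (dimq q (x.take m) * K ^ N)) * K ^ N :=
      mul_le_mul hdx hdz (dimq_pos hq0 hq1 z).le
        (le_trans (dimq_pos hq0 hq1 x).le hdx)
    have heq : δ = (δμ * 1 * ((1 - q ^ 2) ^ 2 * dimq q (x.take m))) /
        (((1 - q ^ 2)⁻¹ * (dimq q (x.take m) * K ^ N)) * K ^ N) := by
      rw [hδ]
      have hdp' : dimq q (x.take m) ≠ 0 := ne_of_gt hdp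
      have hKne : K ≠ 0 := ne_of_gt hKpos
      have h1q' : (1 - q ^ 2) ≠ 0 := ne_of_gt h1q
      field_simp
    rw [heq]
    exact div_le_div₀
      (mul_nonneg (mul_nonneg (le_trans hδμpos.le hμz) (le_trans zero_le_one hfm1))
        (dimq_pos hq0 hq1 y).le)
      hnum hdenpos hden
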